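/- Let n ∈ ℕ, Δt > 0, ζ ∈ [1/2, 1], let M ∈ ℝ^{n×n} be symmetric positive definite and A ∈ ℝ^{n×n} symmetric positive semidefinite, and let e⁻, e, ė⁻, ė ∈ ℝⁿ satisfy the homogeneous error scheme equations (1/Δt)·M(ė − ė⁻) + A((1−ζ)e⁻ + ζe) = 0 and (1/Δt)(e − e⁻) = (1−ζ)ė⁻ + ζė. Then the discrete energy is nonincreasing: ėᵀMė + eᵀAe ≤ (ė⁻)ᵀMė⁻ + (e⁻)ᵀAe⁻. -/

import Mathlib

open Matrix

lemma dot_mulVec_symm {n : ℕ} {M : Matrix (Fin n) (Fin n) ℝ} (hMs : Mᵀ = M)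
    (x y : Fin n → ℝ) : x ⬝ᵥ (M *ᵥ y) = y ⬝ᵥ (M *ᵥ x) := by
  rw [dotProduct_mulVec, ← mulVec_transpose, hMs, dotProduct_comm]

/-- Unconditional energy stability of the generalized trapezoidal (ζ-) scheme for
`ζ ∈ [1/2, 1]`: for one homogeneous step (zero residual) with `M` symmetric
positive definite and `A` symmetric positive semidefinite, the discrete energy
is nonincreasing: `ėᵀMė + eᵀAe ≤ (ė⁻)ᵀMė⁻ + (e⁻)ᵀAe⁻`. -/
theorem error_scheme_energy_stability (n : ℕ) (Δt : ℝ) (hΔt : 0 < Δt)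
    (ζ : ℝ) (hζ : ζ ∈ Set.Icc (1 / 2 : ℝ) 1)
    (M A : Matrix (Fin n) (Fin n) ℝ) (hM : M.PosDef) (hA : A.PosSemidef)
    (em e dem de : Fin n → ℝ)
    (h1 : (1 / Δt) • (M *ᵥ (de - dem)) + A *ᵥ ((1 - ζ) • em + ζ • e) = 0)
    (h2 : (1 / Δt) • (e - em) = (1 - ζ) • dem + ζ • de) :
    de ⬝ᵥ (M *ᵥ de) + e ⬝ᵥ (A *ᵥ e) ≤ dem ⬝ᵥ (M *ᵥ dem) + em ⬝ᵥ (A *ᵥ em) := by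
  obtain ⟨hζ1, hζ2⟩ := hζ
  have hMs : Mᵀ = M := hM.isHermitian
  have hAs : Aᵀ = A := hA.isHermitian
  -- e - em = Δt • w
  have hv : e - em = Δt • ((1 - ζ) • dem + ζ • de) := by
    rw [← h2, smul_smul]
    field_simp
    rw [one_smul]
  -- dot h1 with (e - em)
  have key : (e - em) ⬝ᵥ ((1 / Δt) • (M *ᵥ (de - dem)) + A *ᵥ ((1 - ζ) • em + ζ • e)) = 0 := by
    rw [h1]; simp
  -- scalar abbreviations
  set mdd := de ⬝ᵥ (M *ᵥ de) with hmdd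
  set mmm := dem ⬝ᵥ (M *ᵥ dem) with hmmm
  set mc := de ⬝ᵥ (M *ᵥ dem) with hmc
  set aee := e ⬝ᵥ (A *ᵥ e) with haee
  set amm := em ⬝ᵥ (A *ᵥ em) with hamm
  set ac := e ⬝ᵥ (A *ᵥ em) with hac
  have symM := dot_mulVec_symm hMs dem de
  have symA := dot_mulVec_symm hAs em e
  -- positivity of increments
  have hMu : 0 ≤ (de - dem) ⬝ᵥ (M *ᵥ (de - dem)) := by have := hM.posSemidef.dotProduct_mulVec_nonneg (de - dem); rwa [star_trivial] at this
  have hAv : 0 ≤ (e - em) ⬝ᵥ (A *ᵥ (e - em)) := by have := hA.dotProduct_mulVec_nonneg (e - em); rwa [star_trivial] at this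
  have hMu' : 0 ≤ mdd - 2 * mc + mmm := by
    have := hMu
    simp only [mulVec_sub, dotProduct_sub, sub_dotProduct] at this
    rw [hmdd, hmmm, hmc] at *
    linarith [symM, this]
  have hAv' : 0 ≤ aee - 2 * ac + amm := by
    have := hAv
    simp only [mulVec_sub, dotProduct_sub, sub_dotProduct] at this
    rw [haee, hamm, hac] at *
    linarith [symA, this]
  -- expand key
  have hMterm : (e - em) ⬝ᵥ ((1 / Δt) • (M *ᵥ (de - dem)))
      = ((1 - ζ) • dem + ζ • de) ⬝ᵥ (M *ᵥ (de - dem)) := by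
    rw [hv, smul_dotProduct, dotProduct_smul, smul_eq_mul, smul_eq_mul]
    field_simp
  rw [dotProduct_add, hMterm] at key
  simp only [mulVec_add, mulVec_smul, mulVec_sub, dotProduct_add, dotProduct_smul,
    dotProduct_sub, add_dotProduct, smul_dotProduct, sub_dotProduct, smul_eq_mul] at key
  rw [← hmdd, ← hmmm, ← hmc, ← haee, ← hamm, ← hac] at key
  rw [symM, symA] at key
  nlinarith [key, hMu', hAv', hζ1]
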